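/- For every real c ≥ 1 with 2c an integer, every finite graph G with growth f_G(r) ≤ cr for all positive integers r does not contain the 2c × 2c grid as a minor. -/

import Mathlib

open SimpleGraph

/-- The subgraph `H` of `G` has radius at most `r`. -/
def SimpleGraph.Subgraph.HasRadiusLE {V : Type*} {G : SimpleGraph V} (H : G.Subgraph) (r : ℕ) : Prop :=
  ∃ v, ∃ hv : v ∈ H.verts, ∀ w, ∀ hw : w ∈ H.verts,
    ∃ p : H.coe.Walk ⟨v, hv⟩ ⟨w, hw⟩, p.length ≤ r

/-- The graph `G` has growth `f_G(r) ≤ c·r` for all positive integers `r`. -/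
def SimpleGraph.GrowthLE {V : Type*} (G : SimpleGraph V) (c : ℝ) : Prop :=
  ∀ r : ℕ, 0 < r → ∀ H : G.Subgraph, H.HasRadiusLE r → (H.verts.ncard : ℝ) ≤ c * r

/-- The `n × n` grid graph. -/
def gridGraph (n : ℕ) : SimpleGraph (Fin n × Fin n) :=
  SimpleGraph.fromRel (fun a b =>
    (a.1 = b.1 ∧ a.2.val + 1 = b.2.val) ∨ (a.2 = b.2 ∧ a.1.val + 1 = b.1.val))

/-- `H` is a minor of `G`, via pairwise disjoint connected branch sets. -/
def SimpleGraph.IsMinorOf {W V : Type*} (H : SimpleGraph W) (G : SimpleGraph V) : Prop :=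
  ∃ B : W → Set V,
    (∀ w, (G.induce (B w)).Connected) ∧
    (Pairwise fun w w' => Disjoint (B w) (B w')) ∧
    (∀ w w', H.Adj w w' → ∃ a ∈ B w, ∃ b ∈ B w', G.Adj a b)

namespace NoGridMinorAux

variable {V : Type} [Fintype V] {G : SimpleGraph V}

/-- A walk within a vertex set `T`, of length at most `n`. -/
def WalkIn (G : SimpleGraph V) (T : Set V) (x y : V) (n : ℕ) : Prop :=
  ∃ p : G.Walk x y, p.length ≤ n ∧ ∀ z ∈ p.support, z ∈ T

lemma WalkIn.mono {T T' : Set V} {x y : V} {n n' : ℕ} (h : WalkIn G T x y n)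
    (hT : T ⊆ T') (hn : n ≤ n') : WalkIn G T' x y n' := by
  obtain ⟨p, hl, hs⟩ := h
  exact ⟨p, hl.trans hn, fun z hz => hT (hs z hz)⟩

lemma WalkIn.append {T : Set V} {x y z : V} {a b : ℕ}
    (h1 : WalkIn G T x y a) (h2 : WalkIn G T y z b) : WalkIn G T x z (a + b) := by
  obtain ⟨p, hpl, hps⟩ := h1
  obtain ⟨q, hql, hqs⟩ := h2
  refine ⟨p.append q, ?_, ?_⟩
  · rw [SimpleGraph.Walk.length_append]; omega
  · intro w hw
    rw [SimpleGraph.Walk.mem_support_append_iff] at hw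
    rcases hw with h | h
    · exact hps w h
    · exact hqs w h

lemma walk_out {S : Set V} {x y : ↥S} (p : (G.induce S).Walk x y) :
    ∃ q : G.Walk x y, q.length = p.length ∧ ∀ z ∈ q.support, z ∈ S := by
  induction p with
  | nil =>
      refine ⟨Walk.nil, rfl, ?_⟩
      intro z hz
      rw [Walk.support_nil] at hz
      rcases List.mem_singleton.mp hz with rfl
      exact Subtype.mem _
  | @cons u w y h p ih =>
      obtain ⟨q, hl, hs⟩ := ih
      refine ⟨Walk.cons (show G.Adj (u : V) (w : V) from h) q, by simpa using hl, ?_⟩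
      intro z hz
      rw [Walk.support_cons] at hz
      rcases List.mem_cons.mp hz with rfl | h2
      · exact Subtype.mem _
      · exact hs z h2

lemma exists_walkIn_of_connected {S : Set V} (hconn : (G.induce S).Connected)
    {x y : V} (hx : x ∈ S) (hy : y ∈ S) :
    ∃ p : G.Walk x y, p.length + 1 ≤ S.ncard ∧ ∀ z ∈ p.support, z ∈ S := by
  classical
  obtain ⟨p0⟩ := hconn.preconnected ⟨x, hx⟩ ⟨y, hy⟩
  obtain ⟨q, hl, hs⟩ := walk_out (p0.toPath : (G.induce S).Walk ⟨x, hx⟩ ⟨y, hy⟩)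
  refine ⟨q, ?_, hs⟩
  have h1 : (p0.toPath : (G.induce S).Walk ⟨x, hx⟩ ⟨y, hy⟩).length < Fintype.card ↥S :=
    (p0.toPath).2.length_lt
  have h2 : S.ncard = Fintype.card ↥S := by
    rw [Set.ncard_eq_toFinset_card', Set.toFinset_card]
  omega

lemma walk_cross (A : Set V) : ∀ {x y : V} (p : G.Walk x y), x ∈ A → y ∉ A →
    ∃ a b, G.Adj a b ∧ a ∈ A ∧ b ∉ A ∧ b ∈ p.support := by
  intro x y p
  induction p with
  | nil => intro hx hy; exact absurd hx hy
  | @cons u w y h p ih =>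
      intro hx hy
      by_cases hw : w ∈ A
      · obtain ⟨a, b, hab, ha, hb, hbs⟩ := ih hw hy
        exact ⟨a, b, hab, ha, hb, by
          rw [Walk.support_cons]; exact List.mem_cons_of_mem _ hbs⟩
      · exact ⟨u, w, h, hx, hw, by
          rw [Walk.support_cons]; exact List.mem_cons_of_mem _ p.start_mem_support⟩

lemma exists_adj_cross {S A : Set V} (hconn : (G.induce S).Connected) (hA : A ⊆ S)
    (hAne : A.Nonempty) {y : V} (hyS : y ∈ S) (hyA : y ∉ A) :
    ∃ a ∈ A, ∃ b ∈ S, b ∉ A ∧ G.Adj a b := by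
  obtain ⟨x, hx⟩ := hAne
  obtain ⟨p, _, hs⟩ := exists_walkIn_of_connected hconn (hA hx) hyS
  obtain ⟨a, b, hab, ha, hb, hbs⟩ := walk_cross A p hx hyA
  exact ⟨a, ha, b, hs b hbs, hb, hab⟩

lemma grow {S E : Set V} (hconn : (G.induce S).Connected) (hES : E ⊆ S)
    (hEne : E.Nonempty) (s : ℕ) :
    ∃ P : Set V, P ⊆ S \ E ∧ min s ((S \ E).ncard) ≤ P.ncard ∧
      ∀ y ∈ P, ∃ x ∈ E, WalkIn G (E ∪ P) x y s := by
  induction s with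
  | zero => exact ⟨∅, by simp, by simp, by simp⟩
  | succ s ih =>
      obtain ⟨P, hPS, hPcard, hPwalk⟩ := ih
      by_cases hfull : S \ E ⊆ P
      · have hPeq : P = S \ E := hPS.antisymm hfull
        refine ⟨P, hPS, ?_, fun y hy => ?_⟩
        · rw [hPeq]; exact min_le_right _ _
        · obtain ⟨x, hx, hw⟩ := hPwalk y hy
          exact ⟨x, hx, hw.mono (subset_refl _) (Nat.le_succ s)⟩
      · obtain ⟨y0, hy0, hy0P⟩ := Set.not_subset.mp hfull
        have hAS : E ∪ P ⊆ S := Set.union_subset hES (hPS.trans Set.diff_subset)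
        have hAne : (E ∪ P).Nonempty := hEne.mono Set.subset_union_left
        have hy0A : y0 ∉ E ∪ P := by
          rintro (h | h)
          · exact hy0.2 h
          · exact hy0P h
        obtain ⟨a, ha, b, hbS, hbA, hab⟩ := exists_adj_cross hconn hAS hAne hy0.1 hy0A
        have hbE : b ∉ E := fun h => hbA (Or.inl h)
        have hbP : b ∉ P := fun h => hbA (Or.inr h)
        have hsub : E ∪ P ⊆ E ∪ insert b P := by
          apply Set.union_subset_union_right
          exact Set.subset_insert _ _
        have hedge : WalkIn G (E ∪ insert b P) a b 1 := by
          refine ⟨Walk.cons hab Walk.nil, by simp, ?_⟩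
          intro z hz
          rw [Walk.support_cons, Walk.support_nil] at hz
          rcases List.mem_cons.mp hz with rfl | hz2
          · rcases ha with h | h
            · exact Or.inl h
            · exact Or.inr (Set.mem_insert_of_mem _ h)
          · rcases List.mem_singleton.mp hz2 with rfl
            exact Or.inr (Set.mem_insert _ _)
        refine ⟨insert b P, ?_, ?_, ?_⟩
        · intro z hz
          rcases Set.mem_insert_iff.mp hz with rfl | hz2
          · exact ⟨hbS, hbE⟩
          · exact hPS hz2
        · have hcard : (insert b P).ncard = P.ncard + 1 :=
            Set.ncard_insert_of_notMem hbP (Set.toFinite P)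
          have hneP : P ≠ S \ E := fun h => hy0P (h ▸ hy0)
          have hlt : P.ncard < (S \ E).ncard := by
            apply Set.ncard_lt_ncard _ (Set.toFinite _)
            exact hPS.ssubset_of_ne hneP
          omega
        · intro y hy
          rcases Set.mem_insert_iff.mp hy with rfl | hyP
          · rcases ha with haE | haP
            · exact ⟨a, haE, hedge.mono (subset_refl _) (by omega)⟩
            · obtain ⟨x, hx, hw⟩ := hPwalk a haP
              exact ⟨x, hx, (hw.mono hsub (le_refl _)).append hedge⟩
          · obtain ⟨x, hx, hw⟩ := hPwalk y hyP
            exact ⟨x, hx, hw.mono hsub (Nat.le_succ _)⟩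

lemma chain_connected {m : ℕ} (hm : 0 < m) (Q : Fin m → Set V)
    (hconn : ∀ t, (G.induce (Q t)).Connected)
    (hadj : ∀ t t' : Fin m, (t : ℕ) + 1 = (t' : ℕ) → ∃ a ∈ Q t, ∃ b ∈ Q t', G.Adj a b) :
    (G.induce (⋃ t, Q t)).Connected := by
  have key : ∀ k : ℕ, k < m →
      (G.induce (⋃ (t : Fin m) (_ : (t : ℕ) ≤ k), Q t)).Connected := by
    intro k
    induction k with
    | zero =>
        intro hk
        have hset : (⋃ (t : Fin m) (_ : (t : ℕ) ≤ 0), Q t) = Q ⟨0, hk⟩ := by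
          ext v
          simp only [Set.mem_iUnion]
          constructor
          · rintro ⟨t, ht, hv⟩
            have : t = ⟨0, hk⟩ := Fin.ext (Nat.le_zero.mp ht)
            rwa [this] at hv
          · intro hv
            exact ⟨⟨0, hk⟩, Nat.le_refl 0, hv⟩
        rw [hset]
        exact hconn _
    | succ k ih =>
        intro hk
        have hk' : k < m := Nat.lt_of_succ_lt hk
        have hset : (⋃ (t : Fin m) (_ : (t : ℕ) ≤ k + 1), Q t)
            = (⋃ (t : Fin m) (_ : (t : ℕ) ≤ k), Q t) ∪ Q ⟨k + 1, hk⟩ := by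
          ext v
          simp only [Set.mem_iUnion, Set.mem_union]
          constructor
          · rintro ⟨t, ht, hv⟩
            rcases Nat.lt_or_ge (t : ℕ) (k + 1) with h | h
            · exact Or.inl ⟨t, Nat.lt_succ_iff.mp h, hv⟩
            · have : t = ⟨k + 1, hk⟩ := Fin.ext (le_antisymm ht h)
              rw [this] at hv
              exact Or.inr hv
          · rintro (⟨t, ht, hv⟩ | hv)
            · exact ⟨t, le_trans ht (Nat.le_succ k), hv⟩
            · exact ⟨⟨k + 1, hk⟩, le_refl _, hv⟩
        rw [hset]
        obtain ⟨a, haQ, b, hbQ, hab⟩ := hadj ⟨k, hk'⟩ ⟨k + 1, hk⟩ rfl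
        have haU : a ∈ ⋃ (t : Fin m) (_ : (t : ℕ) ≤ k), Q t := by
          rw [Set.mem_iUnion]
          exact ⟨⟨k, hk'⟩, Set.mem_iUnion.mpr ⟨le_refl _, haQ⟩⟩
        exact connected_induce_union (ih hk').preconnected (hconn _).preconnected haU hbQ hab
  have hfin : (⋃ t, Q t) = ⋃ (t : Fin m) (_ : (t : ℕ) ≤ m - 1), Q t := by
    ext v
    simp only [Set.mem_iUnion]
    constructor
    · rintro ⟨t, hv⟩
      exact ⟨t, by omega, hv⟩
    · rintro ⟨t, _, hv⟩
      exact ⟨t, hv⟩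
  rw [hfin]
  exact key (m - 1) (by omega)

lemma ncard_iUnion_eq {k : ℕ} (Q : Fin k → Set V)
    (hdisj : Pairwise fun i j => Disjoint (Q i) (Q j)) :
    (⋃ i, Q i).ncard = ∑ i, (Q i).ncard := by
  classical
  rw [Set.ncard_eq_toFinset_card', Set.toFinset_iUnion, Finset.card_biUnion]
  · exact Finset.sum_congr rfl fun i _ => (Set.ncard_eq_toFinset_card' _).symm
  · intro i _ j _ hij
    exact Set.disjoint_toFinset.mpr (hdisj hij)

lemma toCoeWalk (T : Set V) : ∀ {x y : V} (p : G.Walk x y), (∀ z ∈ p.support, z ∈ T) →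
    ∀ (hx : x ∈ T) (hy : y ∈ T),
    ∃ q : ((⊤ : G.Subgraph).induce T).coe.Walk ⟨x, hx⟩ ⟨y, hy⟩, q.length = p.length := by
  intro x y p
  induction p with
  | nil =>
      intro _ hx hy
      exact ⟨Walk.nil, rfl⟩
  | @cons u w y h p ih =>
      intro hsup hx hy
      have hw : w ∈ T := by
        apply hsup
        rw [Walk.support_cons]
        exact List.mem_cons_of_mem _ p.start_mem_support
      have hsup' : ∀ z ∈ p.support, z ∈ T := by
        intro z hz
        apply hsup
        rw [Walk.support_cons]
        exact List.mem_cons_of_mem _ hz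
      obtain ⟨q, hq⟩ := ih hsup' hw hy
      have hadj : ((⊤ : G.Subgraph).induce T).coe.Adj ⟨u, hx⟩ ⟨w, hw⟩ := by
        simp only [Subgraph.coe_adj, Subgraph.induce_adj, Subgraph.top_adj]
        exact ⟨hx, hw, h⟩
      exact ⟨Walk.cons hadj q, by simpa using hq⟩

lemma grid_adj_row {m : ℕ} (i j j' : Fin m) (h : (j : ℕ) + 1 = (j' : ℕ)) :
    (gridGraph m).Adj (i, j) (i, j') := by
  rw [gridGraph, SimpleGraph.fromRel_adj]
  constructor
  · intro hEq
    have : j = j' := (Prod.mk.injEq _ _ _ _ ▸ hEq).2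
    rw [this] at h
    omega
  · exact Or.inl (Or.inl ⟨rfl, h⟩)

lemma grid_adj_col {m : ℕ} (j i i' : Fin m) (h : (i : ℕ) + 1 = (i' : ℕ)) :
    (gridGraph m).Adj (i, j) (i', j) := by
  rw [gridGraph, SimpleGraph.fromRel_adj]
  constructor
  · intro hEq
    have : i = i' := (Prod.mk.injEq _ _ _ _ ▸ hEq).1
    rw [this] at h
    omega
  · exact Or.inl (Or.inr ⟨rfl, h⟩)

lemma core (hgrowth : G.GrowthLE c) {m : ℕ} (hm2 : (2 : ℝ) ≤ (m : ℝ))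
    (hmc : (m : ℝ) = 2 * c)
    (P : Fin m → Fin m → Set V)
    (hconn : ∀ i j, (G.induce (P i j)).Connected)
    (hdisj : ∀ (w w' : Fin m × Fin m), w ≠ w' → Disjoint (P w.1 w.2) (P w'.1 w'.2))
    (hadjR : ∀ (i j j' : Fin m), (j : ℕ) + 1 = (j' : ℕ) →
        ∃ a ∈ P i j, ∃ b ∈ P i j', G.Adj a b)
    (hadjC : ∀ (j i i' : Fin m), (i : ℕ) + 1 = (i' : ℕ) →
        ∃ a ∈ P i j, ∃ b ∈ P i' j, G.Adj a b)
    (j0 : Fin m)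
    (hmin : ∀ i : Fin m, (⋃ k, P k j0).ncard ≤ (⋃ j, P i j).ncard) : False := by
  classical
  have hmpos : 0 < m := by
    by_contra h
    push_neg at h
    interval_cases m
    · norm_num at hm2
  set D : Set V := ⋃ k, P k j0 with hD
  set R : Fin m → Set V := fun i => ⋃ j, P i j with hR
  have hPne : ∀ i j, (P i j).Nonempty := by
    intro i j
    have := (hconn i j).nonempty
    exact Set.nonempty_coe_sort.mp this
  have hDconn : (G.induce D).Connected :=
    chain_connected hmpos (fun k => P k j0) (fun k => hconn k j0)
      (fun t t' h => hadjC j0 t t' h)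
  have hRconn : ∀ i, (G.induce (R i)).Connected :=
    fun i => chain_connected hmpos (P i) (hconn i) (hadjR i)
  set L : ℕ := D.ncard with hL
  set E : Fin m → Set V := fun i => P i j0 with hE
  have hEsubD : ∀ i, E i ⊆ D := fun i => Set.subset_iUnion (fun k => P k j0) i
  have hEsubR : ∀ i, E i ⊆ R i := fun i => Set.subset_iUnion (P i) j0
  have hLpos : 1 ≤ L := by
    have : D.Nonempty := (hPne ⟨0, hmpos⟩ j0).mono (hEsubD ⟨0, hmpos⟩)
    exact (Set.ncard_pos (Set.toFinite D)).mpr this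
  -- disjointness of rows
  have hRdisj : ∀ i i' : Fin m, i ≠ i' → Disjoint (R i) (R i') := by
    intro i i' hne
    rw [hR]
    simp only
    rw [Set.disjoint_iUnion_left]
    intro j
    rw [Set.disjoint_iUnion_right]
    intro j'
    exact hdisj (i, j) (i', j') (by simp [hne])
  -- grow each row
  have hgrow : ∀ i, ∃ Pi : Set V, Pi ⊆ R i \ E i ∧
      min L ((R i \ E i).ncard) ≤ Pi.ncard ∧
      ∀ y ∈ Pi, ∃ x ∈ E i, WalkIn G (E i ∪ Pi) x y L :=
    fun i => grow (hRconn i) (hEsubR i) (hPne i j0) L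
  choose Pi hPiSub hPiCard hPiWalk using hgrow
  set T : Set V := D ∪ ⋃ i, Pi i with hT
  -- cardinality bound : m * L ≤ T.ncard
  have hPiRdiff : ∀ i, Pi i ⊆ R i \ E i := hPiSub
  have hPidisjD : ∀ i, Disjoint (Pi i) D := by
    intro i
    rw [Set.disjoint_left]
    intro x hx hxD
    have hx1 := hPiRdiff i hx
    rw [hD, Set.mem_iUnion] at hxD
    obtain ⟨k, hk⟩ := hxD
    by_cases hik : k = i
    · rw [hik] at hk
      exact hx1.2 hk
    · have : Disjoint (R k) (R i) := hRdisj k i hik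
      exact Set.disjoint_left.mp this ((hEsubR k) hk) hx1.1
  have hPidisj : Pairwise fun i i' => Disjoint (Pi i) (Pi i') := by
    intro i i' hne
    exact Set.disjoint_of_subset ((hPiRdiff i).trans Set.diff_subset)
      ((hPiRdiff i').trans Set.diff_subset) (hRdisj i i' hne)
  have hDisjDU : Disjoint D (⋃ i, Pi i) := by
    rw [Set.disjoint_iUnion_right]
    exact fun i => (hPidisjD i).symm
  have hTcard : T.ncard = L + ∑ i, (Pi i).ncard := by
    rw [hT, Set.ncard_union_eq hDisjDU (Set.toFinite _) (Set.toFinite _),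
      ncard_iUnion_eq Pi hPidisj]
  have hEcard : ∑ i, (E i).ncard = L := by
    rw [hL, hD, ncard_iUnion_eq (fun k => P k j0)
      (fun i i' hne => hdisj (i, j0) (i', j0) (by simp [hne]))]
  have hEleL : ∀ i, (E i).ncard ≤ L := by
    intro i
    exact Set.ncard_le_ncard (hEsubD i) (Set.toFinite D)
  have hPiLB : ∀ i, L - (E i).ncard ≤ (Pi i).ncard := by
    intro i
    refine le_trans ?_ (hPiCard i)
    apply le_min
    · exact Nat.sub_le _ _
    · have h1 : (R i \ E i).ncard + (E i).ncard = (R i).ncard :=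
        Set.ncard_diff_add_ncard_of_subset (hEsubR i) (Set.toFinite _)
      have h2 : L ≤ (R i).ncard := hmin i
      omega
  have hsumLB : m * L ≤ T.ncard := by
    have h1 : ∑ i : Fin m, (L - (E i).ncard) ≤ ∑ i, (Pi i).ncard :=
      Finset.sum_le_sum fun i _ => hPiLB i
    have h2 : ∑ i : Fin m, (L - (E i).ncard) + ∑ i, (E i).ncard = m * L := by
      rw [← Finset.sum_add_distrib]
      have : ∀ i : Fin m, L - (E i).ncard + (E i).ncard = L :=
        fun i => Nat.sub_add_cancel (hEleL i)
      rw [Finset.sum_congr rfl fun i _ => this i]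
      simp [Finset.sum_const, Finset.card_univ, mul_comm]
    rw [hTcard]
    omega
  -- radius bound
  obtain ⟨v, hvD⟩ : D.Nonempty := (hPne ⟨0, hmpos⟩ j0).mono (hEsubD ⟨0, hmpos⟩)
  have hvT : v ∈ T := Or.inl hvD
  have hwalks : ∀ w ∈ T, WalkIn G T v w (2 * L - 1) := by
    intro w hw
    rcases hw with hwD | hwU
    · obtain ⟨p, hpl, hps⟩ := exists_walkIn_of_connected hDconn hvD hwD
      exact ⟨p, by omega, fun z hz => Or.inl (hps z hz)⟩
    · rw [Set.mem_iUnion] at hwU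
      obtain ⟨i, hwPi⟩ := hwU
      obtain ⟨x, hxE, hxw⟩ := hPiWalk i w hwPi
      obtain ⟨p, hpl, hps⟩ := exists_walkIn_of_connected hDconn hvD (hEsubD i hxE)
      have h1 : WalkIn G T v x (L - 1) := ⟨p, by omega, fun z hz => Or.inl (hps z hz)⟩
      have h2 : WalkIn G T x w L := by
        refine hxw.mono ?_ (le_refl _)
        intro z hz
        rcases hz with hz | hz
        · exact Or.inl (hEsubD i hz)
        · exact Or.inr (Set.mem_iUnion.mpr ⟨i, hz⟩)
      have := h1.append h2
      refine this.mono (subset_refl _) (by omega)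
  -- build the subgraph
  set H : G.Subgraph := (⊤ : G.Subgraph).induce T with hH
  have hHverts : H.verts = T := rfl
  have hrad : H.HasRadiusLE (2 * L - 1) := by
    refine ⟨v, hvT, ?_⟩
    intro w hw
    obtain ⟨p, hpl, hps⟩ := hwalks w hw
    obtain ⟨q, hql⟩ := toCoeWalk T p hps hvT hw
    exact ⟨q, by omega⟩
  have hgr := hgrowth (2 * L - 1) (by omega) H hrad
  rw [hHverts] at hgr
  -- final arithmetic
  have hTLB : (m * L : ℝ) ≤ (T.ncard : ℝ) := by exact_mod_cast hsumLB
  have hcast : ((2 * L - 1 : ℕ) : ℝ) = 2 * (L : ℝ) - 1 := by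
    have : 1 ≤ 2 * L := by omega
    push_cast [Nat.cast_sub this]
    ring
  rw [hcast] at hgr
  have hc' : c = (m : ℝ) / 2 := by linarith
  have hLR : (1 : ℝ) ≤ (L : ℝ) := by exact_mod_cast hLpos
  nlinarith [hTLB, hgr, hm2, hLR]

end NoGridMinorAux

/-- A finite graph with growth `f_G(r) ≤ c·r`, where `2c` is an integer, has no
`2c × 2c` grid minor. -/
theorem no_grid_minor_of_linear_growth {V : Type} [Fintype V] (G : SimpleGraph V)
    (c : ℝ) (hc : 1 ≤ c) (m : ℕ) (hm : (m : ℝ) = 2 * c) (hgrowth : G.GrowthLE c) :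
    ¬ (gridGraph m).IsMinorOf G := by
  classical
  rintro ⟨B, hBconn, hBdisj, hBadj⟩
  have hm2 : (2 : ℝ) ≤ (m : ℝ) := by rw [hm]; linarith
  have hmpos : 0 < m := by
    by_contra h
    push_neg at h
    interval_cases m
    · norm_num at hm2
  haveI : Nonempty (Fin m) := ⟨⟨0, hmpos⟩⟩
  set RowS : Fin m → Set V := fun i => ⋃ j, B (i, j) with hRowS
  set ColS : Fin m → Set V := fun j => ⋃ i, B (i, j) with hColS
  obtain ⟨i0, _, hi0⟩ := Finset.exists_min_image Finset.univ
    (fun i => (RowS i).ncard) Finset.univ_nonempty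
  obtain ⟨j0, _, hj0⟩ := Finset.exists_min_image Finset.univ
    (fun j => (ColS j).ncard) Finset.univ_nonempty
  by_cases hcase : (ColS j0).ncard ≤ (RowS i0).ncard
  · apply NoGridMinorAux.core hgrowth hm2 hm (fun i j => B (i, j))
      (fun i j => hBconn (i, j))
      (fun w w' hne => hBdisj hne)
      (fun i j j' h => hBadj (i, j) (i, j') (NoGridMinorAux.grid_adj_row i j j' h))
      (fun j i i' h => hBadj (i, j) (i', j) (NoGridMinorAux.grid_adj_col j i i' h))
      j0
    intro i
    calc (⋃ k, B (k, j0)).ncard = (ColS j0).ncard := rfl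
      _ ≤ (RowS i0).ncard := hcase
      _ ≤ (RowS i).ncard := hi0 i (Finset.mem_univ i)
      _ = (⋃ j, B (i, j)).ncard := rfl
  · push_neg at hcase
    apply NoGridMinorAux.core hgrowth hm2 hm (fun i j => B (j, i))
      (fun i j => hBconn (j, i))
      (fun w w' hne => hBdisj (by
        intro hEq
        apply hne
        have h1 : w.2 = w'.2 := (Prod.mk.injEq _ _ _ _ ▸ hEq).1
        have h2 : w.1 = w'.1 := (Prod.mk.injEq _ _ _ _ ▸ hEq).2
        exact Prod.ext h2 h1))
      (fun i j j' h => hBadj (j, i) (j', i) (NoGridMinorAux.grid_adj_col i j j' h))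
      (fun j i i' h => hBadj (j, i) (j, i') (NoGridMinorAux.grid_adj_row j i i' h))
      i0
    intro i
    calc (⋃ k, B (i0, k)).ncard = (RowS i0).ncard := rfl
      _ ≤ (ColS j0).ncard := le_of_lt hcase
      _ ≤ (ColS i).ncard := hj0 i (Finset.mem_univ i)
      _ = (⋃ j, B (j, i)).ncard := rfl
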